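/- arXiv:2312.14136 — 2 statements merged into one kernel-verified Lean document; each statement's English description precedes it below -/
import Mathlib

section
/- Let μ be a probability measure on ℝ^d, z ∈ ℝ^d, r > 0, s > 0 and λ > 0, and let λ_♯μ denote the pushforward of μ under the scaling map x ↦ λx. Then SD^{λr}_0(λz | λ_♯μ) = SD^r_0(z | μ) and SD^{λr}_{λ²s}(λz | λ_♯μ) = SD^r_s(z | μ) (equivalently, SD^{λr}_s(λz | λ_♯μ) = SD^r_{s/λ²}(z | μ)). -/
open MeasureTheory

/-- The sigmoid function with scale `s`. -/
noncomputable def sig (s t : ℝ) : ℝ := 1 / (1 + Real.exp (-t / s))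

/-- The sphere depth `SD^r_s(z|μ)`. For `s = 0` the sigmoid is replaced by the indicator
of `{x : ‖x − c‖ ≤ r}`, giving `SD^r_0(z|μ) = inf_{‖c−z‖=r} μ(B̄(c,r))`. -/
noncomputable def SD (d : ℕ) (r s : ℝ) (z : EuclideanSpace ℝ (Fin d))
    (μ : Measure (EuclideanSpace ℝ (Fin d))) : ℝ :=
  if s = 0 then
    ⨅ c : Metric.sphere z r, (μ (Metric.closedBall (c : EuclideanSpace ℝ (Fin d)) r)).toReal
  else
    ⨅ c : Metric.sphere z r, ∫ x, sig s (r ^ 2 - ‖x - (c : EuclideanSpace ℝ (Fin d))‖ ^ 2) ∂μ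

lemma sig_cont (s : ℝ) : Continuous (sig s) := by
  apply continuous_const.div
  · exact continuous_const.add ((continuous_neg.div_const s).rexp)
  · intro t
    positivity

lemma sig_scale {s t lam : ℝ} (hlam : lam ≠ 0) : sig (lam ^ 2 * s) (lam ^ 2 * t) = sig s t := by
  have h2 : lam ^ 2 ≠ 0 := pow_ne_zero _ hlam
  unfold sig
  rw [neg_div, neg_div, mul_div_mul_left _ _ h2]

lemma norm_smul_sub (d : ℕ) (lam : ℝ) (hlam : 0 < lam) (x c : EuclideanSpace ℝ (Fin d)) :
    ‖lam • x - lam • c‖ = lam * ‖x - c‖ := by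
  rw [← smul_sub, norm_smul, Real.norm_eq_abs, abs_of_pos hlam]

/-- Scaling equivalence between spheres. -/
noncomputable def sphereScale (d : ℕ) (z : EuclideanSpace ℝ (Fin d)) (r lam : ℝ)
    (hlam : 0 < lam) : Metric.sphere z r ≃ Metric.sphere (lam • z) (lam * r) where
  toFun c := ⟨lam • (c : EuclideanSpace ℝ (Fin d)), by
    have hc := c.2
    simp only [Metric.mem_sphere, dist_eq_norm] at hc ⊢
    rw [norm_smul_sub d lam hlam, hc]⟩
  invFun c := ⟨lam⁻¹ • (c : EuclideanSpace ℝ (Fin d)), by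
    have hc := c.2
    simp only [Metric.mem_sphere, dist_eq_norm] at hc ⊢
    have h : lam⁻¹ • (c : EuclideanSpace ℝ (Fin d)) - z
        = lam⁻¹ • ((c : EuclideanSpace ℝ (Fin d)) - lam • z) := by
      rw [smul_sub, inv_smul_smul₀ hlam.ne']
    rw [h, norm_smul, Real.norm_eq_abs, abs_of_pos (inv_pos.mpr hlam), hc]
    field_simp⟩
  left_inv c := Subtype.ext (inv_smul_smul₀ hlam.ne' _)
  right_inv c := Subtype.ext (smul_inv_smul₀ hlam.ne' _)

@[simp] lemma sphereScale_apply (d : ℕ) (z : EuclideanSpace ℝ (Fin d)) (r lam : ℝ)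
    (hlam : 0 < lam) (c : Metric.sphere z r) :
    ((sphereScale d z r lam hlam c : Metric.sphere (lam • z) (lam * r)) :
      EuclideanSpace ℝ (Fin d)) = lam • (c : EuclideanSpace ℝ (Fin d)) := rfl

/-- Scaling relation for the sphere depth: dilating the data, the point and the radius by
`λ` preserves the `s = 0` depth, and for `s > 0` corresponds to rescaling `s` by `λ²`. -/
theorem stmt_4 (d : ℕ) (μ : Measure (EuclideanSpace ℝ (Fin d))) [IsProbabilityMeasure μ]
    (z : EuclideanSpace ℝ (Fin d)) (r s lam : ℝ) (hr : 0 < r) (hs : 0 < s) (hlam : 0 < lam) :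
    SD d (lam * r) 0 (lam • z) (μ.map (fun x => lam • x)) = SD d r 0 z μ ∧
    SD d (lam * r) (lam ^ 2 * s) (lam • z) (μ.map (fun x => lam • x)) = SD d r s z μ := by
  have hl0 : lam ≠ 0 := hlam.ne'
  have hmeas : Measurable (fun x : EuclideanSpace ℝ (Fin d) => lam • x) :=
    (continuous_const_smul lam).measurable
  constructor
  · rw [SD, SD, if_pos rfl, if_pos rfl, ← (sphereScale d z r lam hlam).iInf_comp]
    apply iInf_congr
    intro c
    simp only [sphereScale_apply]
    rw [Measure.map_apply hmeas measurableSet_closedBall]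
    congr 2
    ext x
    simp only [Set.mem_preimage, Metric.mem_closedBall, dist_eq_norm,
      norm_smul_sub d lam hlam]
    exact mul_le_mul_iff_right₀ hlam
  · have hsne : lam ^ 2 * s ≠ 0 := by positivity
    rw [SD, SD, if_neg hsne, if_neg hs.ne', ← (sphereScale d z r lam hlam).iInf_comp]
    apply iInf_congr
    intro c
    simp only [sphereScale_apply]
    rw [integral_map hmeas.aemeasurable]
    · apply integral_congr_ae
      filter_upwards with x
      rw [norm_smul_sub d lam hlam]
      have h : (lam * r) ^ 2 - (lam * ‖x - (c : EuclideanSpace ℝ (Fin d))‖) ^ 2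
          = lam ^ 2 * (r ^ 2 - ‖x - (c : EuclideanSpace ℝ (Fin d))‖ ^ 2) := by ring
      rw [h, sig_scale hl0]
    · apply Continuous.aestronglyMeasurable
      exact (sig_cont _).comp (by fun_prop)
end

section
/- Fix z ∈ ℝ^d, r > 0, s > 0, let F_z = { x ↦ sig_s(r² − ‖x − c‖²) : ‖c − z‖ = r }, and let P be any probability measure on ℝ^d. There is a constant C > 0 (depending only on d, r and s) such that for every ε ∈ (0,1) there exist N ≤ C·(r/ε)^d pairs of measurable functions (l_1,u_1),…,(l_N,u_N) on ℝ^d with the property that for every c with ‖c − z‖ = r there is an index i with l_i ≤ f_{z,c} ≤ u_i pointwise and ∫ (u_i − l_i) dP ≤ ε; in particular the ε-bracketing number N_[](ε, F_z, L¹(P)) is finite for every ε > 0. -/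
open MeasureTheory

section Aux

open Metric ENNReal

lemma sig_nonneg (s t : ℝ) : 0 ≤ sig s t := by
  unfold sig
  positivity

lemma sig_le_one (s t : ℝ) : sig s t ≤ 1 := by
  unfold sig
  rw [div_le_one (by positivity)]
  nlinarith [Real.exp_pos (-t/s)]

lemma hasDerivAt_sig_sq (r s : ℝ) (hs : 0 < s) (t : ℝ) :
    HasDerivAt (fun t : ℝ => sig s (r^2 - t^2))
      (-(Real.exp ((t^2 - r^2)/s) * (2*t/s) / (1 + Real.exp ((t^2 - r^2)/s))^2)) t := by
  have h1 : HasDerivAt (fun t : ℝ => (t^2 - r^2)/s) (2*t/s) t := by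
    have := ((hasDerivAt_pow 2 t).sub_const (r^2)).div_const s
    simpa [pow_one] using this
  have h2 : HasDerivAt (fun t : ℝ => 1 + Real.exp ((t^2 - r^2)/s))
      (Real.exp ((t^2 - r^2)/s) * (2*t/s)) t := ((h1.exp).const_add 1)
  have h3 := h2.inv (by positivity)
  have heq : (fun t : ℝ => sig s (r^2 - t^2)) =
      fun t : ℝ => (1 + Real.exp ((t^2 - r^2)/s))⁻¹ := by
    funext t
    unfold sig
    rw [one_div]
    ring_nf
  rw [heq]
  exact h3.congr_deriv (by ring)

lemma deriv_bound_sig (r s : ℝ) (hr : 0 < r) (hs : 0 < s) (t : ℝ) :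
    |(-(Real.exp ((t^2 - r^2)/s) * (2*t/s) / (1 + Real.exp ((t^2 - r^2)/s))^2))| ≤
      4*r/s + 2/r := by
  set E := Real.exp ((t^2 - r^2)/s) with hE
  have hEpos : 0 < E := Real.exp_pos _
  rw [abs_neg, abs_div, abs_of_pos (by positivity : (0:ℝ) < (1+E)^2)]
  rw [abs_mul, abs_of_pos hEpos, abs_div, abs_of_pos hs, abs_mul, abs_two]
  rcases le_or_gt |t| (2*r) with h | h
  · have h1 : E * (2 * |t| / s) / (1+E)^2 ≤ 2 * |t| / s := by
      rw [div_le_iff₀ (by positivity)]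
      have key : E ≤ (1+E)^2 := by nlinarith [sq_nonneg E]
      have := mul_le_mul_of_nonneg_left key (show (0:ℝ) ≤ 2*|t|/s by positivity)
      nlinarith [this]
    have h2 : 2 * |t| / s ≤ 4*r/s := by rw [div_le_div_iff₀ hs hs]; nlinarith
    have : (0:ℝ) ≤ 2/r := by positivity
    linarith
  · have htpos : 0 < |t| := lt_trans (by positivity) h
    have ht2 : 0 < t^2 := by rw [← sq_abs]; positivity
    have hr2 : r^2 ≤ t^2/4 := by
      have : (2*r)^2 ≤ |t|^2 := by nlinarith
      rw [sq_abs] at this; nlinarith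
    have hElow' : 0 < (3/4) * t^2 / s := by positivity
    have hElow : (3/4) * t^2 / s ≤ E := by
      have h0 : (3/4) * t^2 / s ≤ (t^2 - r^2)/s := by gcongr; nlinarith
      exact h0.trans ((Real.add_one_le_exp _).trans' (by linarith))
    have h1 : E * (2 * |t| / s) / (1+E)^2 ≤ (2 * |t| / s) / E := by
      rw [div_le_div_iff₀ (by positivity) hEpos]
      have key : E^2 ≤ (1+E)^2 := by nlinarith
      have := mul_le_mul_of_nonneg_left key (show (0:ℝ) ≤ 2*|t|/s by positivity)
      nlinarith [this]
    have h2 : (2 * |t| / s) / E ≤ (2 * |t| / s) / ((3/4) * t^2 / s) :=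
      div_le_div_of_nonneg_left (by positivity) hElow' hElow
    have h3 : (2 * |t| / s) / ((3/4) * t^2 / s) = 8 / (3 * |t|) := by
      have ht0 : |t| ≠ 0 := ne_of_gt htpos
      have hs0 : s ≠ 0 := ne_of_gt hs
      field_simp
      rw [← sq_abs t]
      rw [div_eq_iff (by positivity)]; ring
    have h4 : 8 / (3 * |t|) ≤ 2/r := by
      rw [div_le_div_iff₀ (by positivity) hr]
      nlinarith
    have : (0:ℝ) ≤ 4*r/s := by positivity
    linarith [h1.trans (h2.trans_eq h3) |>.trans h4]

lemma sig_sq_lipschitz (r s : ℝ) (hr : 0 < r) (hs : 0 < s) (a b : ℝ) :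
    |sig s (r^2 - a^2) - sig s (r^2 - b^2)| ≤ (4*r/s + 2/r) * |a - b| := by
  have := Convex.norm_image_sub_le_of_norm_deriv_le (𝕜 := ℝ)
    (f := fun t : ℝ => sig s (r^2 - t^2))
    (s := Set.univ) (fun x _ => (hasDerivAt_sig_sq r s hs x).differentiableAt)
    (fun x _ => by
      rw [(hasDerivAt_sig_sq r s hs x).deriv, Real.norm_eq_abs]
      exact deriv_bound_sig r s hr hs x)
    convex_univ (Set.mem_univ b) (Set.mem_univ a)
  simpa [Real.norm_eq_abs] using this

lemma packing_bound {d : ℕ} (z : EuclideanSpace ℝ (Fin d)) (r δ : ℝ) (hr : 0 < r)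
    (hδ : 0 < δ) (T : Finset (EuclideanSpace ℝ (Fin d)))
    (hTs : ∀ t ∈ T, ‖t - z‖ = r)
    (hsep : ∀ a ∈ T, ∀ b ∈ T, a ≠ b → δ ≤ dist a b) :
    (T.card : ℝ) ≤ (1 + 2*r/δ)^d := by
  have hdisj : (T : Set (EuclideanSpace ℝ (Fin d))).PairwiseDisjoint
      (fun t => ball t (δ/2)) := by
    intro a ha b hb hab
    exact ball_disjoint_ball (by simpa using hsep a ha b hb hab)
  have hsub : (⋃ t ∈ T, ball t (δ/2)) ⊆ ball z (r + δ/2) := by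
    intro x hx
    simp only [Set.mem_iUnion] at hx
    obtain ⟨t, ht, hxt⟩ := hx
    rw [mem_ball] at hxt ⊢
    have hd : dist t z = r := by rw [dist_eq_norm]; exact hTs t ht
    calc dist x z ≤ dist x t + dist t z := dist_triangle _ _ _
      _ < δ/2 + r := by linarith
      _ = r + δ/2 := by ring
  have hmeas : ∀ t ∈ T, MeasurableSet (ball t (δ/2)) := fun t _ => measurableSet_ball
  have key : ∑ t ∈ T, volume (ball t (δ/2)) ≤ volume (ball z (r + δ/2)) := by
    rw [← measure_biUnion_finset hdisj hmeas]
    exact measure_mono hsub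
  have hfr : Module.finrank ℝ (EuclideanSpace ℝ (Fin d)) = d := finrank_euclideanSpace_fin
  have hball : ∀ t : EuclideanSpace ℝ (Fin d), volume (ball t (δ/2)) =
      ENNReal.ofReal ((δ/2)^d) * volume (ball (0:EuclideanSpace ℝ (Fin d)) 1) := by
    intro t
    rw [Measure.addHaar_ball_of_pos _ _ (by positivity), hfr]
  have hbig : volume (ball z (r + δ/2)) =
      ENNReal.ofReal ((r + δ/2)^d) * volume (ball (0:EuclideanSpace ℝ (Fin d)) 1) := by
    rw [Measure.addHaar_ball_of_pos _ _ (by positivity), hfr]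
  rw [hbig] at key
  simp only [hball, Finset.sum_const, nsmul_eq_mul] at key
  set v := volume (ball (0:EuclideanSpace ℝ (Fin d)) 1) with hv
  have hv0 : v ≠ 0 := (measure_ball_pos _ _ (by norm_num)).ne'
  have hvtop : v ≠ ⊤ := measure_ball_lt_top.ne
  rw [← mul_assoc] at key
  have key2 : ((T.card : ℕ) : ENNReal) * ENNReal.ofReal ((δ/2)^d) ≤
      ENNReal.ofReal ((r + δ/2)^d) :=
    (ENNReal.mul_le_mul_iff_left hv0 hvtop).mp key
  have h3 : (T.card : ℝ) * (δ/2)^d ≤ (r + δ/2)^d := by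
    rw [← ENNReal.ofReal_natCast, ← ENNReal.ofReal_mul (by positivity)] at key2
    exact (ENNReal.ofReal_le_ofReal_iff (by positivity)).mp key2
  have h4 : (1 + 2*r/δ)^d = ((r + δ/2)/(δ/2))^d := by
    congr 1
    field_simp
    ring
  rw [h4, div_pow, le_div_iff₀ (by positivity)]
  exact h3

lemma net_exists {d : ℕ} (z : EuclideanSpace ℝ (Fin d)) (r δ : ℝ) (hr : 0 < r) (hδ : 0 < δ) :
    ∃ T : Finset (EuclideanSpace ℝ (Fin d)),
      (T.card : ℝ) ≤ (1 + 2*r/δ)^d ∧ (∀ t ∈ T, ‖t - z‖ = r) ∧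
      (∀ c : EuclideanSpace ℝ (Fin d), ‖c - z‖ = r → ∃ t ∈ T, dist c t < δ) := by
  classical
  set A : Set ℕ := {n | ∃ T : Finset (EuclideanSpace ℝ (Fin d)),
      (∀ t ∈ T, ‖t - z‖ = r) ∧ (∀ a ∈ T, ∀ b ∈ T, a ≠ b → δ ≤ dist a b) ∧ T.card = n} with hA
  have hA0 : 0 ∈ A := ⟨∅, by simp, by simp, by simp⟩
  have hbdd : BddAbove A := by
    refine ⟨⌈(1 + 2*r/δ)^d⌉₊, fun n hn => ?_⟩
    obtain ⟨T, hTs, hsep, hcard⟩ := hn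
    have h := packing_bound z r δ hr hδ T hTs hsep
    rw [hcard] at h
    exact_mod_cast h.trans (Nat.le_ceil _)
  obtain ⟨T, hTs, hsep, hcard⟩ := Nat.sSup_mem ⟨0, hA0⟩ hbdd
  refine ⟨T, ?_, hTs, ?_⟩
  · exact packing_bound z r δ hr hδ T hTs hsep
  · intro c hc
    by_contra hcon
    push_neg at hcon
    have hcT : c ∉ T := fun hcT => by
      have := hcon c hcT
      simp at this
      linarith
    have hsep' : ∀ a ∈ insert c T, ∀ b ∈ insert c T, a ≠ b → δ ≤ dist a b := by
      intro a ha b hb hab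
      rcases Finset.mem_insert.mp ha with rfl | ha'
      · rcases Finset.mem_insert.mp hb with rfl | hb'
        · exact absurd rfl hab
        · exact hcon b hb'
      · rcases Finset.mem_insert.mp hb with rfl | hb'
        · rw [dist_comm]; exact hcon a ha'
        · exact hsep a ha' b hb' hab
    have hTs' : ∀ t ∈ insert c T, ‖t - z‖ = r := by
      intro t ht
      rcases Finset.mem_insert.mp ht with rfl | ht'
      · exact hc
      · exact hTs t ht'
    have hmem : T.card + 1 ∈ A := ⟨insert c T, hTs', hsep',
      by rw [Finset.card_insert_of_notMem hcT]⟩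
    have := le_csSup hbdd hmem
    rw [hcard] at this
    omega

lemma continuous_sig_ball {d : ℕ} (r s : ℝ) (hs : 0 < s) (c : EuclideanSpace ℝ (Fin d)) :
    Continuous fun x : EuclideanSpace ℝ (Fin d) => sig s (r^2 - ‖x - c‖^2) := by
  unfold sig
  have h1 : Continuous fun x : EuclideanSpace ℝ (Fin d) => -(r^2 - ‖x - c‖^2)/s := by
    fun_prop
  exact continuous_const.div (continuous_const.add (Real.continuous_exp.comp h1))
    (fun x => by positivity)

end Aux

/-- Bracketing bound for the class `F_z = { x ↦ sig_s(r² − ‖x − c‖²) : ‖c − z‖ = r }`: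
there is `C > 0` (depending only on `d`, `r`, `s`) such that for every `ε ∈ (0,1)` the class
admits an `ε`-bracketing in `L¹(P)` of cardinality at most `C·(r/ε)^d`; in particular the
`ε`-bracketing number is finite for every `ε > 0`. -/
theorem stmt_10 (d : ℕ) (z : EuclideanSpace ℝ (Fin d)) (r s : ℝ) (hr : 0 < r) (hs : 0 < s)
    (P : Measure (EuclideanSpace ℝ (Fin d))) [IsProbabilityMeasure P] :
    (∃ C > (0 : ℝ), ∀ ε ∈ Set.Ioo (0 : ℝ) 1,
      ∃ (N : ℕ) (l u : Fin N → EuclideanSpace ℝ (Fin d) → ℝ),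
        (N : ℝ) ≤ C * (r / ε) ^ d ∧
        (∀ i, Measurable (l i) ∧ Measurable (u i)) ∧
        ∀ c : EuclideanSpace ℝ (Fin d), ‖c - z‖ = r → ∃ i : Fin N,
          (∀ x, l i x ≤ sig s (r ^ 2 - ‖x - c‖ ^ 2) ∧ sig s (r ^ 2 - ‖x - c‖ ^ 2) ≤ u i x) ∧
          (∫ x, (u i x - l i x) ∂P) ≤ ε) ∧
    (∀ ε > (0 : ℝ),
      ∃ (N : ℕ) (l u : Fin N → EuclideanSpace ℝ (Fin d) → ℝ),
        (∀ i, Measurable (l i) ∧ Measurable (u i)) ∧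
        ∀ c : EuclideanSpace ℝ (Fin d), ‖c - z‖ = r → ∃ i : Fin N,
          (∀ x, l i x ≤ sig s (r ^ 2 - ‖x - c‖ ^ 2) ∧ sig s (r ^ 2 - ‖x - c‖ ^ 2) ≤ u i x) ∧
          (∫ x, (u i x - l i x) ∂P) ≤ ε) := by
  
  set K : ℝ := 4*r/s + 2/r with hK
  have hKpos : 0 < K := by positivity
  have hpart1 : ∀ ε ∈ Set.Ioo (0 : ℝ) 1,
      ∃ (N : ℕ) (l u : Fin N → EuclideanSpace ℝ (Fin d) → ℝ),
        (N : ℝ) ≤ (4*K + 1/r)^d * (r / ε) ^ d ∧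
        (∀ i, Measurable (l i) ∧ Measurable (u i)) ∧
        ∀ c : EuclideanSpace ℝ (Fin d), ‖c - z‖ = r → ∃ i : Fin N,
          (∀ x, l i x ≤ sig s (r ^ 2 - ‖x - c‖ ^ 2) ∧ sig s (r ^ 2 - ‖x - c‖ ^ 2) ≤ u i x) ∧
          (∫ x, (u i x - l i x) ∂P) ≤ ε := by
    rintro ε ⟨hε0, hε1⟩
    set δ : ℝ := ε/(2*K) with hδdef
    have hδ : 0 < δ := by positivity
    obtain ⟨T, hcard, hTs, hcov⟩ := net_exists z r δ hr hδ
    refine ⟨T.card,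
      fun i x => sig s (r^2 - ‖x - ((T.equivFin.symm i : _) : EuclideanSpace ℝ (Fin d))‖^2) - K*δ,
      fun i x => sig s (r^2 - ‖x - ((T.equivFin.symm i : _) : EuclideanSpace ℝ (Fin d))‖^2) + K*δ,
      ?_, ?_, ?_⟩
    · -- cardinality bound
      refine hcard.trans ?_
      rw [← mul_pow]
      apply pow_le_pow_left₀ (by positivity)
      have h1ε : 1 ≤ 1/ε := by rw [le_div_iff₀ hε0]; linarith
      have e1 : 1 + 2*r/δ = 1 + 4*K*r/ε := by
        rw [hδdef]; field_simp; try ring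
      rw [e1]
      have e2 : (4*K + 1/r) * (r/ε) = 4*K*r/ε + 1/ε := by field_simp; try ring
      rw [e2]
      linarith [h1ε]
    · intro i
      constructor
      · exact ((continuous_sig_ball r s hs _).sub continuous_const).measurable
      · exact ((continuous_sig_ball r s hs _).add continuous_const).measurable
    · intro c hc
      obtain ⟨t, htT, hdist⟩ := hcov c hc
      refine ⟨T.equivFin ⟨t, htT⟩, ?_, ?_⟩
      · intro x
        have hsymm : ((T.equivFin.symm (T.equivFin ⟨t, htT⟩) : _) :
            EuclideanSpace ℝ (Fin d)) = t := by simp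
        dsimp only
        rw [hsymm]
        have hlip := sig_sq_lipschitz r s hr hs (‖x - c‖) (‖x - t‖)
        have hnorm : |‖x - c‖ - ‖x - t‖| ≤ dist c t := by
          refine (abs_norm_sub_norm_le _ _).trans ?_
          have : (x - c) - (x - t) = t - c := by abel
          rw [this, dist_eq_norm, norm_sub_rev]
        have hKd : K * |‖x - c‖ - ‖x - t‖| ≤ K * δ :=
          mul_le_mul_of_nonneg_left (hnorm.trans hdist.le) hKpos.le
        have habs : |sig s (r^2 - ‖x - c‖^2) - sig s (r^2 - ‖x - t‖^2)| ≤ K*δ :=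
          hlip.trans hKd
        rw [abs_le] at habs
        constructor <;> linarith [habs.1, habs.2]
      · have heq : (fun x => (sig s (r^2 - ‖x - ((T.equivFin.symm (T.equivFin ⟨t, htT⟩) : _) :
            EuclideanSpace ℝ (Fin d))‖^2) + K*δ) -
            (sig s (r^2 - ‖x - ((T.equivFin.symm (T.equivFin ⟨t, htT⟩) : _) :
            EuclideanSpace ℝ (Fin d))‖^2) - K*δ)) = fun _ => 2*(K*δ) := by
          funext x; ring
        rw [heq, integral_const]
        simp only [probReal_univ, ENNReal.toReal_one, one_smul]
        have : 2*(K*δ) = ε := by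
          rw [hδdef]; field_simp; try ring
        exact this.le
  constructor
  · exact ⟨(4*K + 1/r)^d, by positivity, hpart1⟩
  · intro ε hε
    rcases lt_or_ge ε 1 with h1 | h1
    · obtain ⟨N, l, u, _, hmeas, hbr⟩ := hpart1 ε ⟨hε, h1⟩
      exact ⟨N, l, u, hmeas, hbr⟩
    · refine ⟨1, fun _ _ => 0, fun _ _ => 1, fun i => ⟨measurable_const, measurable_const⟩, ?_⟩
      intro c hc
      refine ⟨0, fun x => ⟨sig_nonneg s _, sig_le_one s _⟩, ?_⟩
      simp only [sub_zero, integral_const, probReal_univ, ENNReal.toReal_one, one_smul]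
      exact h1
end
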